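/- Let λ⁺ < 0, λ⁻ < 0, μ⁺ > 0, μ⁻ > 0 and r > 0. For ρ ≥ 0 define t⁺(ρ) = (1/μ⁺)(arctan(μ⁺ρ/(λ⁺ρ − 1)) + π), t⁻(ρ) = (1/μ⁻)(−arctan(μ⁻ρ/(λ⁻ρ − 1)) + π), Φ⁺(ρ) = (λ⁺ − ((λ⁺)² + (μ⁺)²)ρ)/μ⁺, Φ⁻(ρ) = (λ⁻ − ((λ⁻)² + (μ⁻)²)ρ)/μ⁻, and Q(ρ) = |cos(μ⁻t⁻(ρ)) − Φ⁻(ρ)·sin(μ⁻t⁻(ρ))| / |cos(μ⁺t⁺(ρ)) + Φ⁺(ρ)·sin(μ⁺t⁺(ρ))|^r. Then as ρ → +∞: if r > 1 then Q(ρ) → 0; if r < 1 then Q(ρ) → +∞; and if r = 1 then Q(ρ) → √(((λ⁻)² + (μ⁻)²) / ((λ⁺)² + (μ⁺)²)). -/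

import Mathlib

open Real Filter

private lemma key16 (l μ : ℝ) (hl : l < 0) (hμ : 0 < μ) {ρ : ℝ} (hρ : 0 < ρ) :
    |(-Real.cos (Real.arctan (μ * ρ / (l * ρ - 1)))) -
      ((l - (l ^ 2 + μ ^ 2) * ρ) / μ) * Real.sin (Real.arctan (μ * ρ / (l * ρ - 1)))| =
    Real.sqrt ((l ^ 2 + μ ^ 2) * ρ ^ 2 - 2 * l * ρ + 1) := by
  have hd : l * ρ - 1 < 0 := by nlinarith
  have hd' : l * ρ - 1 ≠ 0 := ne_of_lt hd
  have hμ' : μ ≠ 0 := ne_of_gt hμ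
  set u : ℝ := μ * ρ / (l * ρ - 1) with hu
  set s : ℝ := Real.sqrt (1 + u ^ 2) with hs
  have hspos : 0 < s := Real.sqrt_pos.2 (by positivity)
  have hs2 : s ^ 2 = 1 + u ^ 2 := Real.sq_sqrt (by positivity)
  have hcos : Real.cos (Real.arctan u) = 1 / s := Real.cos_arctan u
  have hsin : Real.sin (Real.arctan u) = u / s := Real.sin_arctan u
  have h1 : -1 - ((l - (l ^ 2 + μ ^ 2) * ρ) / μ) * u = (l * ρ - 1) * (1 + u ^ 2) := by
    rw [hu]; field_simp; ring
  have hE : (-Real.cos (Real.arctan u)) -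
      ((l - (l ^ 2 + μ ^ 2) * ρ) / μ) * Real.sin (Real.arctan u) = (l * ρ - 1) * s := by
    rw [hcos, hsin]
    have : -(1 / s) - ((l - (l ^ 2 + μ ^ 2) * ρ) / μ) * (u / s)
        = (-1 - ((l - (l ^ 2 + μ ^ 2) * ρ) / μ) * u) / s := by ring
    rw [this, h1, ← hs2]
    field_simp
  rw [hE, abs_mul, abs_of_pos hspos, abs_of_neg hd,
    ← Real.sqrt_sq (by linarith : (0:ℝ) ≤ -(l*ρ-1)),
    hs, ← Real.sqrt_mul (by positivity) (1 + u ^ 2)]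
  congr 1
  rw [hu]
  field_simp
  ring

private lemma lim16 (l μ : ℝ) (hl : l < 0) (hμ : 0 < μ) :
    Tendsto (fun ρ => Real.sqrt ((l ^ 2 + μ ^ 2) * ρ ^ 2 - 2 * l * ρ + 1) / ρ) atTop
      (nhds (Real.sqrt (l ^ 2 + μ ^ 2))) := by
  have hin : Tendsto (fun ρ : ℝ => (l ^ 2 + μ ^ 2) - 2 * l / ρ + 1 / ρ ^ 2) atTop
      (nhds (l ^ 2 + μ ^ 2)) := by
    have h1 : Tendsto (fun ρ : ℝ => 2 * l / ρ) atTop (nhds 0) := by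
      simpa [div_eq_mul_inv] using tendsto_inv_atTop_zero.const_mul (2 * l)
    have h2 : Tendsto (fun ρ : ℝ => 1 / ρ ^ 2) atTop (nhds 0) := by
      have := (tendsto_inv_atTop_zero : Tendsto (fun x : ℝ => x⁻¹) atTop (nhds 0))
      simpa [one_div, sq] using this.mul this
    simpa using (tendsto_const_nhds.sub h1).add h2
  apply hin.sqrt.congr'
  filter_upwards [eventually_gt_atTop (0:ℝ)] with ρ hρ
  rw [show (l ^ 2 + μ ^ 2) - 2 * l / ρ + 1 / ρ ^ 2
      = ((l ^ 2 + μ ^ 2) * ρ ^ 2 - 2 * l * ρ + 1) / ρ ^ 2 by field_simp,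
    Real.sqrt_div (by nlinarith), Real.sqrt_sq hρ.le]

theorem stmt_16 (lp lm μp μm r : ℝ)
    (hlp : lp < 0) (hlm : lm < 0) (hμp : 0 < μp) (hμm : 0 < μm) (hr : 0 < r)
    (tp tm Φp Φm Q : ℝ → ℝ)
    (htp : ∀ ρ, tp ρ = (1 / μp) * (Real.arctan (μp * ρ / (lp * ρ - 1)) + π))
    (htm : ∀ ρ, tm ρ = (1 / μm) * (-Real.arctan (μm * ρ / (lm * ρ - 1)) + π))
    (hΦp : ∀ ρ, Φp ρ = (lp - (lp ^ 2 + μp ^ 2) * ρ) / μp)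
    (hΦm : ∀ ρ, Φm ρ = (lm - (lm ^ 2 + μm ^ 2) * ρ) / μm)
    (hQ : ∀ ρ, Q ρ =
      |Real.cos (μm * tm ρ) - Φm ρ * Real.sin (μm * tm ρ)| /
        |Real.cos (μp * tp ρ) + Φp ρ * Real.sin (μp * tp ρ)| ^ r) :
    (1 < r → Filter.Tendsto Q Filter.atTop (nhds 0)) ∧
    (r < 1 → Filter.Tendsto Q Filter.atTop Filter.atTop) ∧
    (r = 1 → Filter.Tendsto Q Filter.atTop
      (nhds (Real.sqrt ((lm ^ 2 + μm ^ 2) / (lp ^ 2 + μp ^ 2))))) := by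
  set F : ℝ → ℝ := fun ρ => Real.sqrt ((lm ^ 2 + μm ^ 2) * ρ ^ 2 - 2 * lm * ρ + 1) with hF
  set G : ℝ → ℝ := fun ρ => Real.sqrt ((lp ^ 2 + μp ^ 2) * ρ ^ 2 - 2 * lp * ρ + 1) with hG
  have hGpos : ∀ ρ : ℝ, 0 < ρ → 0 < G ρ := by
    intro ρ hρ
    refine Real.sqrt_pos.2 ?_
    nlinarith [sq_nonneg (lp * ρ - 1), mul_pos (mul_pos hμp hμp) (mul_pos hρ hρ)]
  -- Q ρ = F ρ / (G ρ)^r for ρ > 0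
  have hQFG : ∀ ρ : ℝ, 0 < ρ → Q ρ = F ρ / (G ρ) ^ r := by
    intro ρ hρ
    have hμp' : μp ≠ 0 := ne_of_gt hμp
    have hμm' : μm ≠ 0 := ne_of_gt hμm
    have hp : μp * tp ρ = Real.arctan (μp * ρ / (lp * ρ - 1)) + π := by
      rw [htp]; field_simp
    have hm : μm * tm ρ = -Real.arctan (μm * ρ / (lm * ρ - 1)) + π := by
      rw [htm]; field_simp
    have hnum : |Real.cos (μm * tm ρ) - Φm ρ * Real.sin (μm * tm ρ)| = F ρ := by
      rw [hm, neg_add_eq_sub, Real.cos_pi_sub, Real.sin_pi_sub, hΦm]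
      have := key16 lm μm hlm hμm hρ
      rw [show -Real.cos (Real.arctan (μm * ρ / (lm * ρ - 1))) -
          (lm - (lm ^ 2 + μm ^ 2) * ρ) / μm * Real.sin (Real.arctan (μm * ρ / (lm * ρ - 1)))
          = (-Real.cos (Real.arctan (μm * ρ / (lm * ρ - 1)))) -
          ((lm - (lm ^ 2 + μm ^ 2) * ρ) / μm) * Real.sin (Real.arctan (μm * ρ / (lm * ρ - 1)))
          from rfl] at this ⊢
      exact this
    have hden : |Real.cos (μp * tp ρ) + Φp ρ * Real.sin (μp * tp ρ)| = G ρ := by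
      rw [hp, Real.cos_add_pi, Real.sin_add_pi, hΦp]
      have := key16 lp μp hlp hμp hρ
      rw [show -Real.cos (Real.arctan (μp * ρ / (lp * ρ - 1))) +
          (lp - (lp ^ 2 + μp ^ 2) * ρ) / μp * (-Real.sin (Real.arctan (μp * ρ / (lp * ρ - 1))))
          = (-Real.cos (Real.arctan (μp * ρ / (lp * ρ - 1)))) -
          ((lp - (lp ^ 2 + μp ^ 2) * ρ) / μp) * Real.sin (Real.arctan (μp * ρ / (lp * ρ - 1)))
          by ring]
      exact this
    rw [hQ, hnum, hden]
  -- A ρ := (F ρ / ρ) / ((G ρ / ρ) ^ r)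
  set A : ℝ → ℝ := fun ρ => (F ρ / ρ) / ((G ρ / ρ) ^ r) with hA
  have hQA : Q =ᶠ[atTop] fun ρ => A ρ * ρ ^ (1 - r) := by
    filter_upwards [eventually_gt_atTop (0:ℝ)] with ρ hρ
    have hρ' : ρ ≠ 0 := ne_of_gt hρ
    have hGρ := hGpos ρ hρ
    have hGr : (0:ℝ) < (G ρ) ^ r := Real.rpow_pos_of_pos hGρ r
    have hρr : (0:ℝ) < ρ ^ r := Real.rpow_pos_of_pos hρ r
    simp only [hQFG ρ hρ, hA]
    rw [Real.div_rpow hGρ.le hρ.le, Real.rpow_sub hρ, Real.rpow_one]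
    field_simp
  have hlimF : Tendsto (fun ρ => F ρ / ρ) atTop (nhds (Real.sqrt (lm ^ 2 + μm ^ 2))) :=
    lim16 lm μm hlm hμm
  have hlimG : Tendsto (fun ρ => G ρ / ρ) atTop (nhds (Real.sqrt (lp ^ 2 + μp ^ 2))) :=
    lim16 lp μp hlp hμp
  have hsp : (0:ℝ) < Real.sqrt (lp ^ 2 + μp ^ 2) := Real.sqrt_pos.2 (by positivity)
  have hsm : (0:ℝ) < Real.sqrt (lm ^ 2 + μm ^ 2) := Real.sqrt_pos.2 (by positivity)
  have hlimGr : Tendsto (fun ρ => (G ρ / ρ) ^ r) atTop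
      (nhds ((Real.sqrt (lp ^ 2 + μp ^ 2)) ^ r)) :=
    hlimG.rpow_const (Or.inl (ne_of_gt hsp))
  have hcpos : (0:ℝ) < Real.sqrt (lm ^ 2 + μm ^ 2) / (Real.sqrt (lp ^ 2 + μp ^ 2)) ^ r :=
    div_pos hsm (Real.rpow_pos_of_pos hsp r)
  have hlimA : Tendsto A atTop
      (nhds (Real.sqrt (lm ^ 2 + μm ^ 2) / (Real.sqrt (lp ^ 2 + μp ^ 2)) ^ r)) :=
    hlimF.div hlimGr (ne_of_gt (Real.rpow_pos_of_pos hsp r))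
  refine ⟨fun hr1 => ?_, fun hr1 => ?_, fun hr1 => ?_⟩
  · have h0 : Tendsto (fun ρ : ℝ => ρ ^ (1 - r)) atTop (nhds 0) := by
      have := tendsto_rpow_neg_atTop (by linarith : (0:ℝ) < r - 1)
      simpa [neg_sub] using this
    have := hlimA.mul h0
    rw [mul_zero] at this
    exact Tendsto.congr' hQA.symm this
  · have h0 : Tendsto (fun ρ : ℝ => ρ ^ (1 - r)) atTop atTop :=
      tendsto_rpow_atTop (by linarith)
    exact Tendsto.congr' hQA.symm (hlimA.pos_mul_atTop hcpos h0)
  · subst hr1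
    have h0 : (fun ρ : ℝ => A ρ * ρ ^ ((1:ℝ) - 1)) =ᶠ[atTop] A := by
      filter_upwards with ρ
      norm_num
    have : Tendsto Q atTop
        (nhds (Real.sqrt (lm ^ 2 + μm ^ 2) / (Real.sqrt (lp ^ 2 + μp ^ 2)) ^ (1:ℝ))) :=
      Tendsto.congr' (hQA.trans h0).symm (by simpa using hlimA)
    rw [Real.rpow_one] at this
    rwa [Real.sqrt_div (by positivity)]
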